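/- Trickling Down Theorem. Let (X, w) be a weighted pure d-dimensional simplicial complex with d ≥ 2 such that (i) for every vertex v ∈ X(0), the 1-skeleton of the link X_v is a λ-spectral expander, where 0 ≤ λ < 1, and (ii) the 1-skeleton of X is connected. Then the 1-skeleton of X is a (λ/(1−λ))-spectral expander. -/

import Mathlib

/-!
Weighted pure simplicial complexes, links, cochains, signless differentials
and high dimensional random walk operators.

Conventions: faces are `Finset`s of vertices. A cochain "of dimension `k`"
(an element of `C^k(X;ℝ)`) is represented by a function `Finset V → ℝ`
evaluated on faces of **cardinality** `c = k + 1`; all operators are indexed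
by cardinality.
-/

open Finset

namespace HDRW

noncomputable section

variable {V : Type*} [DecidableEq V] [Fintype V]

/-- A weighted family of faces (the data of a weighted complex or of a link). -/
structure WFam (V : Type*) [DecidableEq V] [Fintype V] where
  faces : Finset (Finset V)
  w : Finset V → ℝ

namespace WFam

/-- The faces of cardinality `c` (i.e. of dimension `c - 1`). -/
def dimFaces (Y : WFam V) (c : ℕ) : Finset (Finset V) :=
  Y.faces.filter fun σ => σ.card = c

/-- The link of a face `τ`, as a weighted family; the weights are
`w_τ(s) = w (s ∪ τ) / (C(|s| + |τ|, |τ|) * w τ)`. -/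
def link (Y : WFam V) (τ : Finset V) : WFam V where
  faces := Finset.univ.powerset.filter fun s => Disjoint s τ ∧ s ∪ τ ∈ Y.faces
  w := fun s => Y.w (s ∪ τ) / (((s.card + τ.card).choose τ.card : ℝ) * Y.w τ)

/-- The inner product of two `c`-cochains: `⟨f, g⟩ = Σ_{σ} w σ * f σ * g σ`. -/
def inner (Y : WFam V) (c : ℕ) (f g : Finset V → ℝ) : ℝ :=
  ∑ σ ∈ Y.dimFaces c, Y.w σ * (f σ * g σ)

/-- The squared norm `‖f‖² = ⟨f, f⟩` of a `c`-cochain. -/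
def norm2 (Y : WFam V) (c : ℕ) (f : Finset V → ℝ) : ℝ := Y.inner c f f

end WFam

/-- The signless differential `d` from cochains on faces of cardinality `c`
(dimension `c-1`) to cochains on faces of cardinality `c+1`:
`(d f)(σ) = (1/(c+1)) Σ_{τ ⊆ σ, |τ| = c} f τ`. -/
def sDiff (c : ℕ) (f : Finset V → ℝ) : Finset V → ℝ :=
  fun σ => ((c : ℝ) + 1)⁻¹ * ∑ τ ∈ σ.powerset.filter (fun τ => τ.card = c), f τ

/-- Iterated signless differential `C_a → C_{a+n}` (in cardinality indexing),
i.e. `d_{a+n-2} ⋯ d_{a-1}` in dimension indexing. -/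
def sDiffIter (a : ℕ) : ℕ → (Finset V → ℝ) → (Finset V → ℝ)
  | 0, f => f
  | n + 1, f => sDiff (a + n) (sDiffIter a n f)

namespace WFam

/-- The adjoint `d^*` of the signless differential, from cochains on faces of
cardinality `c+1` to cochains on faces of cardinality `c`; it is given by the
explicit formula `(d^* f)(τ) = Σ_{σ ∈ X(c), τ ⊆ σ} w_τ(σ ∖ τ) * f σ` (a sum
over the cardinality-`(c+1)` faces containing `τ`). -/
def sAdj (Y : WFam V) (c : ℕ) (f : Finset V → ℝ) : Finset V → ℝ :=
  fun τ => ∑ σ ∈ (Y.dimFaces (c + 1)).filter (fun σ => τ ⊆ σ),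
    (Y.link τ).w (σ \ τ) * f σ

/-- Iterated adjoint of the signless differential, `C_{a+n} → C_a`
(in cardinality indexing), i.e. `d_{a-1}^* ⋯ d_{a+n-2}^*`. -/
def sAdjIter (Y : WFam V) : ℕ → ℕ → (Finset V → ℝ) → (Finset V → ℝ)
  | _, 0, f => f
  | a, n + 1, f => Y.sAdj a (sAdjIter Y (a + 1) n f)

/-- The non-lazy up-down random walk operator `M⁺` on cochains of cardinality
`c` (dimension `k = c-1`): `(M⁺ f)(σ) = (1/(k+1)) Σ_{τ, σ ∪ τ ∈ X(k+1)} w_σ(τ∖σ) f τ`. -/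
def nonLazy (Y : WFam V) (c : ℕ) (f : Finset V → ℝ) : Finset V → ℝ :=
  fun σ => (c : ℝ)⁻¹ *
    ∑ τ ∈ (Y.dimFaces c).filter (fun τ => σ ∪ τ ∈ Y.dimFaces (c + 1)),
      (Y.link σ).w (τ \ σ) * f τ

/-- The (lazy) up-down random walk operator `U` on cochains of cardinality `c`
(dimension `k = c-1`):
`(U f)(σ) = (1/(k+2)) f σ + (1/(k+2)) Σ_{τ, σ ∪ τ ∈ X(k+1)} w_σ(τ∖σ) f τ`. -/
def upDown (Y : WFam V) (c : ℕ) (f : Finset V → ℝ) : Finset V → ℝ :=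
  fun σ => ((c : ℝ) + 1)⁻¹ * f σ + ((c : ℝ) + 1)⁻¹ *
    ∑ τ ∈ (Y.dimFaces c).filter (fun τ => σ ∪ τ ∈ Y.dimFaces (c + 1)),
      (Y.link σ).w (τ \ σ) * f τ

/-- The down-up random walk operator `D` on cochains of cardinality `c`
(dimension `k = c-1`). -/
def downUp (Y : WFam V) (c : ℕ) (f : Finset V → ℝ) : Finset V → ℝ :=
  fun σ => (c : ℝ)⁻¹ *
      (∑ τ' ∈ σ.powerset.filter (fun τ' => τ'.card = c - 1), (Y.link τ').w (σ \ τ')) * f σ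
    + (c : ℝ)⁻¹ *
      ∑ τ ∈ (Y.dimFaces c).filter (fun τ => τ ≠ σ ∧ σ ∩ τ ∈ Y.dimFaces (c - 1)),
        (Y.link (σ ∩ τ)).w (τ \ σ) * f τ

/-- The `i`-down-up operator `D^i = d ⋯ d d^* ⋯ d^*` (going down `i+1` steps and
back up) on cochains of cardinality `c` (dimension `k = c-1`); in dimension
indexing this is `D_k^i = d_{k-1} ⋯ d_{k-i-1} d_{k-i-1}^* ⋯ d_{k-1}^*`. -/
def downUpIter (Y : WFam V) (c i : ℕ) (f : Finset V → ℝ) : Finset V → ℝ :=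
  sDiffIter (c - (i + 1)) (i + 1) (Y.sAdjIter (c - (i + 1)) (i + 1) f)

/-- `Y` (through its 1-skeleton) is a `γ`-(one sided) spectral expander:
every function on the vertices orthogonal to the constants has Rayleigh
quotient of the non-lazy random walk at most `γ` (Rayleigh characterization of
"the second largest eigenvalue of `M₀⁺` is at most `γ`"). -/
def isExpander (Y : WFam V) (γ : ℝ) : Prop :=
  ∀ f : Finset V → ℝ, Y.inner 1 f (fun _ => 1) = 0 →
    Y.inner 1 (Y.nonLazy 1 f) f ≤ γ * Y.norm2 1 f

/-- `Y` (through its 1-skeleton) is connected: the eigenvalue `1` of the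
non-lazy random walk `M₀⁺` has multiplicity one, i.e. every nonzero function on
the vertices orthogonal to the constants has Rayleigh quotient strictly
less than `1`. -/
def isConnected (Y : WFam V) : Prop :=
  ∀ f : Finset V → ℝ, Y.inner 1 f (fun _ => 1) = 0 → Y.norm2 1 f ≠ 0 →
    Y.inner 1 (Y.nonLazy 1 f) f < Y.norm2 1 f

/-- `f` is an `i`-level cochain of cardinality `c` (dimension `k = c-1`) with
respect to localization: for every face `σ` of cardinality `i` (i.e. of
dimension `i-1`), the localization `f_σ` is orthogonal to the constants in the
link `X_σ`. -/
def isLevel (Y : WFam V) (i c : ℕ) (f : Finset V → ℝ) : Prop :=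
  ∀ σ ∈ Y.dimFaces i,
    (Y.link σ).inner (c - i) (fun s => f (σ ∪ s)) (fun _ => 1) = 0

/-- `f` is a proper `i`-level cochain of cardinality `c`: it is an `i`-level
cochain which is in addition orthogonal to every `(i+1)`-level cochain. -/
def isProperLevel (Y : WFam V) (i c : ℕ) (f : Finset V → ℝ) : Prop :=
  Y.isLevel i c f ∧ ∀ g : Finset V → ℝ, Y.isLevel (i + 1) c g → Y.inner c f g = 0

end WFam

/-- The coboundary operator on oriented cochains (represented by their values
on the increasing ordering of each face, with respect to a linear order on the
vertices): `(δ f)(σ) = Σ_{j} (-1)^j f(σ ∖ {j-th smallest element of σ})`. -/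
def coboundary {V : Type*} [LinearOrder V] [Fintype V] (f : Finset V → ℝ) :
    Finset V → ℝ :=
  fun σ => ∑ v ∈ σ, (-1 : ℝ) ^ (σ.filter (fun u => u < v)).card * f (σ.erase v)

/-- A weighted pure `d`-dimensional simplicial complex: a downward closed
family of faces, each contained in a face of cardinality `d+1`
(dimension `d`), together with a weight function `w : X → (0, 1]` summing to
`1` on the top faces and satisfying the averaging recurrence on lower faces. -/
structure WSC (V : Type*) [DecidableEq V] [Fintype V] (d : ℕ) extends WFam V where
  empty_mem : ∅ ∈ faces
  down_closed : ∀ ⦃σ⦄, σ ∈ faces → ∀ ⦃τ⦄, τ ⊆ σ → τ ∈ faces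
  isPure : ∀ σ ∈ faces, ∃ σ' ∈ faces, σ ⊆ σ' ∧ σ'.card = d + 1
  w_pos : ∀ σ ∈ faces, 0 < w σ
  w_le_one : ∀ σ ∈ faces, w σ ≤ 1
  w_sum_top : ∑ σ ∈ faces.filter (fun σ => σ.card = d + 1), w σ = 1
  w_down : ∀ τ ∈ faces, τ.card ≤ d →
    w τ = (((d + 1).choose τ.card : ℝ))⁻¹ *
      ∑ σ ∈ faces.filter (fun σ => σ.card = d + 1 ∧ τ ⊆ σ), w σ


/-! ### Auxiliary lemmas for the proof of the trickling down theorem -/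

section TricklingAux

open scoped RealInnerProductSpace

namespace WFam

variable {Z : WFam V}

lemma mem_dimFaces' {c : ℕ} {σ : Finset V} :
    σ ∈ Z.dimFaces c ↔ σ ∈ Z.faces ∧ σ.card = c := mem_filter

lemma disjoint_of_card_union {s t : Finset V} (h : (s ∪ t).card = s.card + t.card) :
    Disjoint s t := by
  have := Finset.card_union_add_card_inter s t
  have : (s ∩ t).card = 0 := by omega
  rw [Finset.card_eq_zero] at this
  exact Finset.disjoint_iff_inter_eq_empty.2 this

lemma link_w_sdiff (Z : WFam V) {s t : Finset V} (hs : s.card = 1) (ht : t.card = 1)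
    (hst : (s ∪ t).card = 2) : (Z.link s).w (t \ s) = Z.w (s ∪ t) / (2 * Z.w s) := by
  have hd : Disjoint s t := disjoint_of_card_union (by omega)
  have hts : t \ s = t := sdiff_eq_self_of_disjoint hd.symm
  rw [hts]
  show Z.w (t ∪ s) / (((t.card + s.card).choose s.card : ℝ) * Z.w s) = _
  rw [ht, hs, union_comm t s]
  norm_num

lemma nonLazy_one_apply (Z : WFam V) (f : Finset V → ℝ) {s : Finset V} (hs : s.card = 1) :
    Z.nonLazy 1 f s = ∑ t ∈ (Z.dimFaces 1).filter (fun t => s ∪ t ∈ Z.dimFaces 2),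
      Z.w (s ∪ t) / (2 * Z.w s) * f t := by
  rw [nonLazy]
  rw [Nat.cast_one, inv_one, one_mul]
  refine Finset.sum_congr rfl fun t htm => ?_
  rw [mem_filter] at htm
  obtain ⟨ht1, ht2⟩ := htm
  rw [Z.link_w_sdiff hs (mem_dimFaces'.1 ht1).2 (mem_dimFaces'.1 ht2).2]

lemma nonLazy_congr (Z : WFam V) {f f' : Finset V → ℝ}
    (h : ∀ t ∈ Z.dimFaces 1, f t = f' t) (σ : Finset V) :
    Z.nonLazy 1 f σ = Z.nonLazy 1 f' σ := by
  rw [nonLazy, nonLazy]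
  congr 1
  refine Finset.sum_congr rfl fun t htm => ?_
  rw [h t (Finset.mem_filter.1 htm).1]

lemma inner_congr (Z : WFam V) {c : ℕ} {f f' g g' : Finset V → ℝ}
    (hf : ∀ t ∈ Z.dimFaces c, f t = f' t) (hg : ∀ t ∈ Z.dimFaces c, g t = g' t) :
    Z.inner c f g = Z.inner c f' g' := by
  refine Finset.sum_congr rfl fun t htm => ?_
  rw [hf t htm, hg t htm]

lemma nonLazy_add (Z : WFam V) (f g : Finset V → ℝ) (σ : Finset V) :
    Z.nonLazy 1 (fun x => f x + g x) σ = Z.nonLazy 1 f σ + Z.nonLazy 1 g σ := by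
  simp only [nonLazy, Nat.cast_one, inv_one, one_mul, mul_add, Finset.sum_add_distrib]

lemma nonLazy_smul (Z : WFam V) (c : ℝ) (f : Finset V → ℝ) (σ : Finset V) :
    Z.nonLazy 1 (fun x => c * f x) σ = c * Z.nonLazy 1 f σ := by
  simp only [nonLazy, Nat.cast_one, inv_one, one_mul, Finset.mul_sum]
  exact Finset.sum_congr rfl fun t _ => by ring

lemma nonLazy_sub (Z : WFam V) (f g : Finset V → ℝ) (σ : Finset V) :
    Z.nonLazy 1 (fun x => f x - g x) σ = Z.nonLazy 1 f σ - Z.nonLazy 1 g σ := by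
  simp only [nonLazy, Nat.cast_one, inv_one, one_mul, mul_sub, Finset.sum_sub_distrib]

lemma nonLazy_sub_const (Z : WFam V) (f : Finset V → ℝ) (c : ℝ) (σ : Finset V) :
    Z.nonLazy 1 (fun x => f x - c) σ
      = Z.nonLazy 1 f σ - c * Z.nonLazy 1 (fun _ => (1:ℝ)) σ := by
  simp only [nonLazy, Nat.cast_one, inv_one, one_mul, mul_sub, Finset.sum_sub_distrib,
    Finset.mul_sum]
  congr 1
  exact Finset.sum_congr rfl fun t _ => by ring

/-- The fundamental double-sum expansion of `⟨M f, g⟩`. -/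
lemma gen0 (Z : WFam V) (hpos : ∀ s ∈ Z.dimFaces 1, 0 < Z.w s) (f g : Finset V → ℝ) :
    Z.inner 1 (Z.nonLazy 1 f) g
      = ∑ s ∈ Z.dimFaces 1, ∑ t ∈ (Z.dimFaces 1).filter (fun t => s ∪ t ∈ Z.dimFaces 2),
          Z.w (s ∪ t) / 2 * (f t * g s) := by
  refine Finset.sum_congr rfl fun s hsm => ?_
  rw [Z.nonLazy_one_apply f (mem_dimFaces'.1 hsm).2, Finset.sum_mul, Finset.mul_sum]
  refine Finset.sum_congr rfl fun t _ => ?_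
  have hws : Z.w s ≠ 0 := ne_of_gt (hpos s hsm)
  field_simp

/-- Reindexing: sum over the edges through `t` written as a sum over the other endpoint. -/
lemma hb (Z : WFam V)
    (h1 : ∀ t ∈ Z.dimFaces 1, ∑ e ∈ (Z.dimFaces 2).filter (fun e => t ⊆ e), Z.w e = 2 * Z.w t)
    (hdown : ∀ e ∈ Z.dimFaces 2, ∀ s ⊆ e, s.card = 1 → s ∈ Z.dimFaces 1)
    {t : Finset V} (ht : t ∈ Z.dimFaces 1) :
    ∑ s ∈ (Z.dimFaces 1).filter (fun s => s ∪ t ∈ Z.dimFaces 2), Z.w (s ∪ t) = 2 * Z.w t := by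
  rw [← h1 t ht]
  refine Finset.sum_nbij' (fun s => s ∪ t) (fun e => e \ t) ?_ ?_ ?_ ?_ ?_
  · intro s hsm
    rw [mem_filter] at hsm ⊢
    exact ⟨hsm.2, subset_union_right⟩
  · intro e hem
    rw [mem_filter] at hem
    obtain ⟨he2, hte⟩ := hem
    have hc : (e \ t).card = 1 := by
      rw [Finset.card_sdiff_of_subset hte, (mem_dimFaces'.1 he2).2, (mem_dimFaces'.1 ht).2]
    rw [mem_filter]
    refine ⟨hdown e he2 _ Finset.sdiff_subset hc, ?_⟩
    rwa [Finset.sdiff_union_of_subset hte]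
  · intro s hsm
    rw [mem_filter] at hsm
    have hc2 : (s ∪ t).card = 2 := (mem_dimFaces'.1 hsm.2).2
    have hd : Disjoint s t := disjoint_of_card_union
      (by rw [hc2, (mem_dimFaces'.1 hsm.1).2, (mem_dimFaces'.1 ht).2])
    exact Finset.union_sdiff_cancel_right hd
  · intro e hem
    rw [mem_filter] at hem
    exact Finset.sdiff_union_of_subset hem.2
  · intro s _
    rfl

/-- `⟨M f, g⟩ = ⟨M g, f⟩`. -/
lemma genA (Z : WFam V) (hpos : ∀ s ∈ Z.dimFaces 1, 0 < Z.w s) (f g : Finset V → ℝ) :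
    Z.inner 1 (Z.nonLazy 1 f) g = Z.inner 1 (Z.nonLazy 1 g) f := by
  rw [Z.gen0 hpos f g, Z.gen0 hpos g f]
  simp only [Finset.sum_filter]
  rw [Finset.sum_comm]
  refine Finset.sum_congr rfl fun s _ => Finset.sum_congr rfl fun t _ => ?_
  rw [union_comm t s]
  by_cases h : s ∪ t ∈ Z.dimFaces 2
  · rw [if_pos h, if_pos h]; ring
  · rw [if_neg h, if_neg h]

/-- `⟨M f, 1⟩ = ⟨f, 1⟩`. -/
lemma genB (Z : WFam V) (hpos : ∀ s ∈ Z.dimFaces 1, 0 < Z.w s)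
    (h1 : ∀ t ∈ Z.dimFaces 1, ∑ e ∈ (Z.dimFaces 2).filter (fun e => t ⊆ e), Z.w e = 2 * Z.w t)
    (hdown : ∀ e ∈ Z.dimFaces 2, ∀ s ⊆ e, s.card = 1 → s ∈ Z.dimFaces 1)
    (f : Finset V → ℝ) :
    Z.inner 1 (Z.nonLazy 1 f) (fun _ => 1) = Z.inner 1 f (fun _ => 1) := by
  rw [Z.gen0 hpos f (fun _ => 1)]
  simp only [Finset.sum_filter]
  rw [Finset.sum_comm]
  refine Finset.sum_congr rfl fun t htm => ?_
  have : ∀ s ∈ Z.dimFaces 1,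
      (if s ∪ t ∈ Z.dimFaces 2 then Z.w (s ∪ t) / 2 * (f t * 1) else 0)
      = (if s ∪ t ∈ Z.dimFaces 2 then Z.w (s ∪ t) else 0) * (f t / 2) := by
    intro s _
    by_cases h : s ∪ t ∈ Z.dimFaces 2
    · rw [if_pos h, if_pos h]; ring
    · rw [if_neg h, if_neg h, zero_mul]
  rw [Finset.sum_congr rfl this, ← Finset.sum_mul, ← Finset.sum_filter,
    Z.hb h1 hdown htm]
  ring

end WFam

end TricklingAux
namespace WSC

variable {d : ℕ} (X : WSC V d)

lemma w_pos' {σ : Finset V} {c : ℕ} (h : σ ∈ X.toWFam.dimFaces c) : 0 < X.w σ :=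
  X.w_pos σ (Finset.mem_filter.1 h).1

/-- Counting faces between `τ` and `ρ`. -/
lemma card_between {τ ρ : Finset V} (hρ : ρ ∈ X.faces) (hτρ : τ ⊆ ρ) {b : ℕ}
    (hab : τ.card ≤ b) :
    ((X.faces.filter (fun σ => σ.card = b ∧ τ ⊆ σ)).filter (fun σ => σ ⊆ ρ)).card
      = (ρ.card - τ.card).choose (b - τ.card) := by
  rw [← Finset.card_sdiff_of_subset hτρ, ← Finset.card_powersetCard (b - τ.card) (ρ \ τ)]
  refine Finset.card_nbij' (fun σ => σ \ τ) (fun u => u ∪ τ) ?_ ?_ ?_ ?_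
  · intro σ hσ
    simp only [Finset.mem_coe, Finset.mem_filter] at hσ
    obtain ⟨⟨hσF, hσc, hτσ⟩, hσρ⟩ := hσ
    rw [Finset.mem_coe, Finset.mem_powersetCard]
    exact ⟨Finset.sdiff_subset_sdiff hσρ Finset.Subset.rfl,
      by rw [Finset.card_sdiff_of_subset hτσ, hσc]⟩
  · intro u hu
    rw [Finset.mem_coe, Finset.mem_powersetCard] at hu
    obtain ⟨huρ, huc⟩ := hu
    have hdisj : Disjoint u τ := Finset.disjoint_of_subset_left huρ Finset.sdiff_disjoint
    have huρ' : u ∪ τ ⊆ ρ := Finset.union_subset (huρ.trans Finset.sdiff_subset) hτρ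
    simp only [Finset.mem_coe, Finset.mem_filter]
    refine ⟨⟨X.down_closed hρ huρ', ?_, Finset.subset_union_right⟩, huρ'⟩
    rw [Finset.card_union_of_disjoint hdisj, huc]
    omega
  · intro σ hσ
    simp only [Finset.mem_coe, Finset.mem_filter] at hσ
    exact Finset.sdiff_union_of_subset hσ.1.2.2
  · intro u hu
    rw [Finset.mem_coe, Finset.mem_powersetCard] at hu
    have hdisj : Disjoint u τ := Finset.disjoint_of_subset_left hu.1 Finset.sdiff_disjoint
    exact Finset.union_sdiff_cancel_right hdisj

/-- The weight of `τ` determines the total weight of the cardinality-`b` faces above it. -/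
lemma sum_w {τ : Finset V} (hτ : τ ∈ X.faces) {b : ℕ} (hab : τ.card ≤ b) (hb : b ≤ d + 1) :
    ∑ σ ∈ X.faces.filter (fun σ => σ.card = b ∧ τ ⊆ σ), X.w σ
      = (b.choose τ.card : ℝ) * X.w τ := by
  rcases eq_or_lt_of_le hab with heq | hlt
  · have hset : X.faces.filter (fun σ => σ.card = b ∧ τ ⊆ σ) = {τ} := by
      ext σ
      simp only [Finset.mem_filter, Finset.mem_singleton]
      constructor
      · rintro ⟨hσF, hσc, hτσ⟩
        exact ((Finset.eq_of_subset_of_card_le hτσ (by omega))).symm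
      · rintro rfl
        exact ⟨hτ, heq, Finset.Subset.rfl⟩
    rw [hset, Finset.sum_singleton, ← heq, Nat.choose_self, Nat.cast_one, one_mul]
  rcases eq_or_lt_of_le hb with hbeq | hblt
  · -- b = d + 1 : directly from `w_down`
    have hw := X.w_down τ hτ (by omega)
    have hch : (0:ℝ) < ((d + 1).choose τ.card : ℝ) := by
      exact_mod_cast Nat.choose_pos (by omega)
    rw [hbeq, hw]
    field_simp
  · -- b ≤ d
    have hbd : b ≤ d := by omega
    have step1 : ∀ σ ∈ X.faces.filter (fun σ => σ.card = b ∧ τ ⊆ σ),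
        X.w σ = (((d + 1).choose b : ℝ))⁻¹ *
          ∑ ρ ∈ X.faces.filter (fun ρ => ρ.card = d + 1 ∧ τ ⊆ ρ),
            (if σ ⊆ ρ then X.w ρ else 0) := by
      intro σ hσ
      simp only [Finset.mem_filter] at hσ
      obtain ⟨hσF, hσc, hτσ⟩ := hσ
      rw [X.w_down σ hσF (by omega)]
      congr 1
      · rw [hσc]
      rw [← Finset.sum_filter, Finset.filter_filter]
      apply Finset.sum_congr _ (fun _ _ => rfl)
      apply Finset.filter_congr
      intro ρ _
      constructor
      · rintro ⟨hc, hs⟩; exact ⟨⟨hc, hτσ.trans hs⟩, hs⟩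
      · rintro ⟨⟨hc, _⟩, hs⟩; exact ⟨hc, hs⟩
    rw [Finset.sum_congr rfl step1, ← Finset.mul_sum, Finset.sum_comm]
    have step2 : ∀ ρ ∈ X.faces.filter (fun ρ => ρ.card = d + 1 ∧ τ ⊆ ρ),
        (∑ σ ∈ X.faces.filter (fun σ => σ.card = b ∧ τ ⊆ σ), if σ ⊆ ρ then X.w ρ else 0)
          = ((d + 1 - τ.card).choose (b - τ.card) : ℝ) * X.w ρ := by
      intro ρ hρ
      simp only [Finset.mem_filter] at hρ
      obtain ⟨hρF, hρc, hτρ⟩ := hρ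
      rw [← Finset.sum_filter, Finset.sum_const, X.card_between hρF hτρ hab, hρc,
        nsmul_eq_mul]
    rw [Finset.sum_congr rfl step2, ← Finset.mul_sum]
    have hwd := X.w_down τ hτ (by omega)
    have hchτ : (0:ℝ) < ((d + 1).choose τ.card : ℝ) := by
      exact_mod_cast Nat.choose_pos (by omega)
    have hsum : ∑ ρ ∈ X.faces.filter (fun ρ => ρ.card = d + 1 ∧ τ ⊆ ρ), X.w ρ
        = ((d + 1).choose τ.card : ℝ) * X.w τ := by
      rw [hwd]; field_simp
    rw [hsum]
    have hnat : (d + 1).choose b * b.choose τ.card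
        = (d + 1).choose τ.card * (d + 1 - τ.card).choose (b - τ.card) :=
      Nat.choose_mul hab
    have hnat' : (((d + 1).choose b : ℝ)) * (b.choose τ.card : ℝ)
        = ((d + 1).choose τ.card : ℝ) * ((d + 1 - τ.card).choose (b - τ.card) : ℝ) := by
      exact_mod_cast congrArg (Nat.cast (R := ℝ)) hnat
    have hchb : (0:ℝ) < ((d + 1).choose b : ℝ) := by
      exact_mod_cast Nat.choose_pos hb
    field_simp
    linear_combination (-X.w τ) * hnat'

lemma w_empty : X.w ∅ = 1 := by
  have h := X.w_down ∅ X.empty_mem (Nat.zero_le d)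
  rw [Finset.card_empty, Nat.choose_zero_right, Nat.cast_one, inv_one, one_mul] at h
  rw [h, ← X.w_sum_top]
  apply Finset.sum_congr _ (fun _ _ => rfl)
  apply Finset.filter_congr
  intro ρ _
  simp [Finset.empty_subset]

lemma sum_w_vertices : ∑ σ ∈ X.toWFam.dimFaces 1, X.w σ = 1 := by
  have h := X.sum_w X.empty_mem (b := 1) (by simp) (by omega)
  rw [Finset.card_empty, Nat.choose_zero_right, Nat.cast_one, one_mul, X.w_empty] at h
  rw [← h]
  apply Finset.sum_congr _ (fun _ _ => rfl)
  apply Finset.filter_congr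
  intro ρ _
  simp [Finset.empty_subset]

lemma h1X (hd : 2 ≤ d) : ∀ t ∈ X.toWFam.dimFaces 1,
    ∑ e ∈ (X.toWFam.dimFaces 2).filter (fun e => t ⊆ e), X.w e = 2 * X.w t := by
  intro t ht
  rw [WFam.mem_dimFaces'] at ht
  have h := X.sum_w ht.1 (b := 2) (by omega) (by omega)
  rw [ht.2] at h
  rw [show X.toWFam.dimFaces 2 = X.faces.filter (fun σ => σ.card = 2) from rfl,
    Finset.filter_filter, h]
  norm_num

lemma e2X (hd : 2 ≤ d) : ∀ e ∈ X.toWFam.dimFaces 2,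
    ∑ T ∈ (X.toWFam.dimFaces 3).filter (fun T => e ⊆ T), X.w T = 3 * X.w e := by
  intro e he
  rw [WFam.mem_dimFaces'] at he
  have h := X.sum_w he.1 (b := 3) (by omega) (by omega)
  rw [he.2] at h
  rw [show X.toWFam.dimFaces 3 = X.faces.filter (fun σ => σ.card = 3) from rfl,
    Finset.filter_filter, h]
  norm_num

lemma hdownX : ∀ e ∈ X.toWFam.dimFaces 2, ∀ s ⊆ e, s.card = 1 →
    s ∈ X.toWFam.dimFaces 1 := by
  intro e he s hse hs
  rw [WFam.mem_dimFaces'] at he ⊢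
  exact ⟨X.down_closed he.1 hse, hs⟩

lemma hposX : ∀ s ∈ X.toWFam.dimFaces 1, 0 < X.toWFam.w s := fun s hs => X.w_pos' hs

/-- Sum over the third vertices of triangles containing a fixed edge. -/
lemma pwX (hd : 2 ≤ d) {e : Finset V} (he : e ∈ X.toWFam.dimFaces 2) :
    ∑ σ ∈ (X.toWFam.dimFaces 1).filter (fun σ => e ∪ σ ∈ X.toWFam.dimFaces 3),
      X.w (e ∪ σ) = 3 * X.w e := by
  rw [← X.e2X hd e he]
  refine Finset.sum_nbij' (fun σ => e ∪ σ) (fun T => T \ e) ?_ ?_ ?_ ?_ ?_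
  · intro σ hσ
    rw [Finset.mem_filter] at hσ ⊢
    exact ⟨hσ.2, Finset.subset_union_left⟩
  · intro T hT
    rw [Finset.mem_filter] at hT
    obtain ⟨hT3, heT⟩ := hT
    rw [WFam.mem_dimFaces'] at hT3
    rw [Finset.mem_filter, WFam.mem_dimFaces']
    have hc : (T \ e).card = 1 := by
      rw [Finset.card_sdiff_of_subset heT, hT3.2, (WFam.mem_dimFaces'.1 he).2]
    refine ⟨⟨X.down_closed hT3.1 Finset.sdiff_subset, hc⟩, ?_⟩
    rw [Finset.union_sdiff_of_subset heT]
    exact WFam.mem_dimFaces'.2 hT3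
  · intro σ hσ
    rw [Finset.mem_filter] at hσ
    have hσ1 := (WFam.mem_dimFaces'.1 hσ.1).2
    have h3 := (WFam.mem_dimFaces'.1 hσ.2).2
    have hdisj : Disjoint e σ := WFam.disjoint_of_card_union
      (by rw [h3, (WFam.mem_dimFaces'.1 he).2, hσ1])
    exact Finset.union_sdiff_cancel_left hdisj
  · intro T hT
    rw [Finset.mem_filter] at hT
    exact Finset.union_sdiff_of_subset hT.2
  · intro σ _
    rfl

section LinkLemmas

variable {σ : Finset V} (hσ : σ ∈ X.toWFam.dimFaces 1)
include hσ

lemma linkw1 {s : Finset V} (hs : s.card = 1) :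
    (X.toWFam.link σ).w s = X.w (s ∪ σ) / (2 * X.w σ) := by
  have hσ1 := (WFam.mem_dimFaces'.1 hσ).2
  show X.w (s ∪ σ) / (((s.card + σ.card).choose σ.card : ℝ) * X.w σ) = _
  rw [hs, hσ1]
  norm_num

lemma linkw2 {s : Finset V} (hs : s.card = 2) :
    (X.toWFam.link σ).w s = X.w (s ∪ σ) / (3 * X.w σ) := by
  have hσ1 := (WFam.mem_dimFaces'.1 hσ).2
  show X.w (s ∪ σ) / (((s.card + σ.card).choose σ.card : ℝ) * X.w σ) = _
  rw [hs, hσ1]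
  norm_num

/-- The vertices of the link of `σ` are the other endpoints of edges through `σ`. -/
lemma linkSE : (X.toWFam.link σ).dimFaces 1
    = (X.toWFam.dimFaces 1).filter (fun t => σ ∪ t ∈ X.toWFam.dimFaces 2) := by
  have hσm := WFam.mem_dimFaces'.1 hσ
  ext t
  simp only [WFam.dimFaces, WFam.link, Finset.mem_filter, Finset.mem_powerset]
  constructor
  · rintro ⟨⟨_, hdisj, htσ⟩, ht1⟩
    have hc2 : (σ ∪ t).card = 2 := by
      rw [union_comm σ t, Finset.card_union_of_disjoint hdisj, ht1, hσm.2]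
    exact ⟨⟨X.down_closed htσ Finset.subset_union_left, ht1⟩,
      ⟨by rwa [union_comm σ t], hc2⟩⟩
  · rintro ⟨⟨htF, ht1⟩, hσt, hc2⟩
    have hdisj : Disjoint σ t := WFam.disjoint_of_card_union (by omega)
    exact ⟨⟨Finset.subset_univ t, hdisj.symm, by rwa [union_comm t σ]⟩, ht1⟩

lemma hposY : ∀ s ∈ (X.toWFam.link σ).dimFaces 1, 0 < (X.toWFam.link σ).w s := by
  intro s hs
  rw [X.linkSE hσ, Finset.mem_filter] at hs
  obtain ⟨hs1, hs2⟩ := hs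
  rw [X.linkw1 hσ (WFam.mem_dimFaces'.1 hs1).2, union_comm s σ]
  exact div_pos (X.w_pos _ (WFam.mem_dimFaces'.1 hs2).1)
    (by have := X.w_pos' hσ; positivity)

lemma hdownY : ∀ e ∈ (X.toWFam.link σ).dimFaces 2, ∀ s ⊆ e, s.card = 1 →
    s ∈ (X.toWFam.link σ).dimFaces 1 := by
  intro e he s hse hs1
  simp only [WFam.dimFaces, WFam.link, Finset.mem_filter, Finset.mem_powerset] at he ⊢
  obtain ⟨⟨_, hdisj, heσ⟩, he2⟩ := he
  exact ⟨⟨Finset.subset_univ s, Finset.disjoint_of_subset_left hse hdisj,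
    X.down_closed heσ (Finset.union_subset_union_left hse)⟩, hs1⟩

lemma h1Y (hd : 2 ≤ d) : ∀ t ∈ (X.toWFam.link σ).dimFaces 1,
    ∑ e ∈ ((X.toWFam.link σ).dimFaces 2).filter (fun e => t ⊆ e),
      (X.toWFam.link σ).w e = 2 * (X.toWFam.link σ).w t := by
  intro t ht
  have hσm := WFam.mem_dimFaces'.1 hσ
  have htm : (t ∈ Finset.univ.powerset ∧ Disjoint t σ ∧ t ∪ σ ∈ X.faces) ∧ t.card = 1 := by
    simpa only [WFam.dimFaces, WFam.link, Finset.mem_filter] using ht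
  obtain ⟨⟨-, htdisj, htσF⟩, ht1⟩ := htm
  have htσ2 : t ∪ σ ∈ X.toWFam.dimFaces 2 := WFam.mem_dimFaces'.2
    ⟨htσF, by rw [Finset.card_union_of_disjoint htdisj, ht1, hσm.2]⟩
  have step1 : ∀ e ∈ ((X.toWFam.link σ).dimFaces 2).filter (fun e => t ⊆ e),
      (X.toWFam.link σ).w e = X.w (e ∪ σ) / (3 * X.w σ) := by
    intro e he
    rw [Finset.mem_filter] at he
    exact X.linkw2 hσ (WFam.mem_dimFaces'.1 he.1).2
  rw [Finset.sum_congr rfl step1]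
  have step2 : ∑ e ∈ ((X.toWFam.link σ).dimFaces 2).filter (fun e => t ⊆ e),
      X.w (e ∪ σ) / (3 * X.w σ)
      = ∑ T ∈ (X.toWFam.dimFaces 3).filter (fun T => t ∪ σ ⊆ T), X.w T / (3 * X.w σ) := by
    refine Finset.sum_nbij' (fun e => e ∪ σ) (fun T => T \ σ) ?_ ?_ ?_ ?_ ?_
    · intro e he
      simp only [WFam.dimFaces, WFam.link, Finset.mem_filter, Finset.mem_powerset] at he
      obtain ⟨⟨⟨_, hedisj, heσF⟩, he2⟩, hte⟩ := he
      rw [Finset.mem_filter, WFam.mem_dimFaces']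
      refine ⟨⟨heσF, by rw [Finset.card_union_of_disjoint hedisj, he2, hσm.2]⟩, ?_⟩
      exact Finset.union_subset_union_left hte
    · intro T hT
      rw [Finset.mem_filter, WFam.mem_dimFaces'] at hT
      obtain ⟨⟨hTF, hT3⟩, htσT⟩ := hT
      have hσT : σ ⊆ T := Finset.subset_union_right.trans htσT
      simp only [WFam.dimFaces, WFam.link, Finset.mem_filter, Finset.mem_powerset]
      refine ⟨⟨⟨Finset.subset_univ _, Finset.sdiff_disjoint, ?_⟩, ?_⟩, ?_⟩
      · rwa [Finset.sdiff_union_of_subset hσT]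
      · rw [Finset.card_sdiff_of_subset hσT, hT3, hσm.2]
      · rw [Finset.subset_sdiff]
        exact ⟨Finset.subset_union_left.trans htσT, htdisj⟩
    · intro e he
      simp only [WFam.dimFaces, WFam.link, Finset.mem_filter, Finset.mem_powerset] at he
      exact Finset.union_sdiff_cancel_right he.1.1.2.1
    · intro T hT
      rw [Finset.mem_filter, WFam.mem_dimFaces'] at hT
      exact Finset.sdiff_union_of_subset (Finset.subset_union_right.trans hT.2)
    · intro e _
      rfl
  rw [step2, ← Finset.sum_div, X.e2X hd _ htσ2,
    X.linkw1 hσ ht1]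
  have hwσ : X.w σ ≠ 0 := ne_of_gt (X.w_pos' hσ)
  field_simp

end LinkLemmas

section MainIdentities

lemma edge_of_triple {s t σ : Finset V} (hs1 : s.card = 1) (ht1 : t.card = 1)
    (hσ1 : σ.card = 1) (h3 : s ∪ t ∪ σ ∈ X.toWFam.dimFaces 3) :
    s ∪ t ∈ X.toWFam.dimFaces 2 := by
  rw [WFam.mem_dimFaces'] at h3 ⊢
  have hc3 := h3.2
  have hle : (s ∪ t).card ≤ 2 := by
    have := Finset.card_union_le s t
    omega
  have hge : 2 ≤ (s ∪ t).card := by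
    have h1 := Finset.card_union_le (s ∪ t) σ
    omega
  exact ⟨X.down_closed h3.1 Finset.subset_union_left, by omega⟩

lemma linkY2_iff {s t σ : Finset V} (hσ : σ ∈ X.toWFam.dimFaces 1) (hs1 : s.card = 1)
    (ht1 : t.card = 1) :
    s ∪ t ∈ (X.toWFam.link σ).dimFaces 2 ↔ s ∪ t ∪ σ ∈ X.toWFam.dimFaces 3 := by
  have hσm := WFam.mem_dimFaces'.1 hσ
  simp only [WFam.dimFaces, WFam.link, Finset.mem_filter, Finset.mem_powerset]
  constructor
  · rintro ⟨⟨-, hdisj, hF⟩, hc2⟩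
    exact ⟨hF, by rw [Finset.card_union_of_disjoint hdisj, hc2, hσm.2]⟩
  · rintro ⟨hF, hc3⟩
    have hst2 : (s ∪ t).card = 2 := by
      have hle := Finset.card_union_le s t
      have h1 := Finset.card_union_le (s ∪ t) σ
      have h4 := Finset.card_le_card (Finset.subset_union_left : s ∪ t ⊆ s ∪ t ∪ σ)
      omega
    have hdisj : Disjoint (s ∪ t) σ :=
      WFam.disjoint_of_card_union (by rw [hc3, hst2, hσm.2])
    exact ⟨⟨Finset.subset_univ _, hdisj, hF⟩, hst2⟩

lemma mem_linkY_left {s t σ : Finset V} (hσ : σ ∈ X.toWFam.dimFaces 1)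
    (hsX : s ∈ X.toWFam.dimFaces 1) (ht1 : t.card = 1)
    (h3 : s ∪ t ∪ σ ∈ X.toWFam.dimFaces 3) : s ∈ (X.toWFam.link σ).dimFaces 1 := by
  have hs1 := (WFam.mem_dimFaces'.1 hsX).2
  have hY2 := (X.linkY2_iff hσ hs1 ht1).2 h3
  simp only [WFam.dimFaces, WFam.link, Finset.mem_filter, Finset.mem_powerset] at hY2 ⊢
  obtain ⟨⟨-, hdisj, hF⟩, -⟩ := hY2
  refine ⟨⟨Finset.subset_univ _, Finset.disjoint_of_subset_left Finset.subset_union_left hdisj,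
    X.down_closed hF (Finset.union_subset_union_left Finset.subset_union_left)⟩, hs1⟩

lemma mem_linkY_right {s t σ : Finset V} (hσ : σ ∈ X.toWFam.dimFaces 1)
    (hs1 : s.card = 1) (htX : t ∈ X.toWFam.dimFaces 1)
    (h3 : s ∪ t ∪ σ ∈ X.toWFam.dimFaces 3) : t ∈ (X.toWFam.link σ).dimFaces 1 := by
  have ht1 := (WFam.mem_dimFaces'.1 htX).2
  have hY2 := (X.linkY2_iff hσ hs1 ht1).2 h3
  simp only [WFam.dimFaces, WFam.link, Finset.mem_filter, Finset.mem_powerset] at hY2 ⊢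
  obtain ⟨⟨-, hdisj, hF⟩, -⟩ := hY2
  refine ⟨⟨Finset.subset_univ _, Finset.disjoint_of_subset_left Finset.subset_union_right hdisj,
    X.down_closed hF (Finset.union_subset_union_left Finset.subset_union_right)⟩, ht1⟩

/-- Localization of the norm: `Σ_σ w(σ) ‖f‖²_{X_σ} = ‖f‖²`. -/
lemma locG1 (hd : 2 ≤ d) (f : Finset V → ℝ) :
    ∑ σ ∈ X.toWFam.dimFaces 1, X.w σ * (X.toWFam.link σ).inner 1 f f
      = X.toWFam.norm2 1 f := by
  have step1 : ∀ σ ∈ X.toWFam.dimFaces 1, X.w σ * (X.toWFam.link σ).inner 1 f f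
      = ∑ s ∈ (X.toWFam.dimFaces 1).filter (fun s => σ ∪ s ∈ X.toWFam.dimFaces 2),
          X.w (σ ∪ s) / 2 * (f s * f s) := by
    intro σ hσm
    rw [WFam.inner, X.linkSE hσm, Finset.mul_sum]
    refine Finset.sum_congr rfl fun s hs => ?_
    rw [Finset.mem_filter] at hs
    rw [X.linkw1 hσm (WFam.mem_dimFaces'.1 hs.1).2, union_comm s σ]
    have hwσ : X.w σ ≠ 0 := ne_of_gt (X.w_pos' hσm)
    field_simp
  rw [Finset.sum_congr rfl step1]
  simp only [Finset.sum_filter]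
  rw [Finset.sum_comm, WFam.norm2, WFam.inner]
  refine Finset.sum_congr rfl fun s hs => ?_
  have hsplit : ∀ σ ∈ X.toWFam.dimFaces 1,
      (if σ ∪ s ∈ X.toWFam.dimFaces 2 then X.w (σ ∪ s) / 2 * (f s * f s) else 0)
      = (if σ ∪ s ∈ X.toWFam.dimFaces 2 then X.toWFam.w (σ ∪ s) else 0) * (f s * f s / 2) := by
    intro σ _
    by_cases h : σ ∪ s ∈ X.toWFam.dimFaces 2
    · rw [if_pos h, if_pos h]; ring
    · rw [if_neg h, if_neg h, zero_mul]
  rw [Finset.sum_congr rfl hsplit, ← Finset.sum_mul, ← Finset.sum_filter,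
    X.toWFam.hb (X.h1X hd) X.hdownX hs]
  ring

/-- Localization of the quadratic form: `Σ_σ w(σ) ⟨M_σ f, f⟩_{X_σ} = ⟨M f, f⟩`. -/
lemma locG2 (hd : 2 ≤ d) (f : Finset V → ℝ) :
    ∑ σ ∈ X.toWFam.dimFaces 1,
        X.w σ * (X.toWFam.link σ).inner 1 ((X.toWFam.link σ).nonLazy 1 f) f
      = X.toWFam.inner 1 (X.toWFam.nonLazy 1 f) f := by
  have step1 : ∀ σ ∈ X.toWFam.dimFaces 1,
      X.w σ * (X.toWFam.link σ).inner 1 ((X.toWFam.link σ).nonLazy 1 f) f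
      = ∑ s ∈ X.toWFam.dimFaces 1, ∑ t ∈ X.toWFam.dimFaces 1,
          (if s ∪ t ∪ σ ∈ X.toWFam.dimFaces 3
            then X.w (s ∪ t ∪ σ) / 6 * (f t * f s) else 0) := by
    intro σ hσm
    have hwσ : X.w σ ≠ 0 := ne_of_gt (X.w_pos' hσm)
    rw [(X.toWFam.link σ).gen0 (X.hposY hσm) f f, Finset.mul_sum]
    have hsub : (X.toWFam.link σ).dimFaces 1 ⊆ X.toWFam.dimFaces 1 := by
      rw [X.linkSE hσm]; exact Finset.filter_subset _ _
    have inner_eq : ∀ s ∈ (X.toWFam.link σ).dimFaces 1,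
        X.w σ * ∑ t ∈ ((X.toWFam.link σ).dimFaces 1).filter
            (fun t => s ∪ t ∈ (X.toWFam.link σ).dimFaces 2),
          (X.toWFam.link σ).w (s ∪ t) / 2 * (f t * f s)
        = ∑ t ∈ X.toWFam.dimFaces 1,
            (if s ∪ t ∪ σ ∈ X.toWFam.dimFaces 3
              then X.w (s ∪ t ∪ σ) / 6 * (f t * f s) else 0) := by
      intro s hsY
      have hs1 : s.card = 1 := by
        have := hsub hsY; exact (WFam.mem_dimFaces'.1 this).2
      have hval : ∀ t ∈ ((X.toWFam.link σ).dimFaces 1).filter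
            (fun t => s ∪ t ∈ (X.toWFam.link σ).dimFaces 2),
          X.w σ * ((X.toWFam.link σ).w (s ∪ t) / 2 * (f t * f s))
          = X.w (s ∪ t ∪ σ) / 6 * (f t * f s) := by
        intro t htm
        rw [Finset.mem_filter] at htm
        have hst2 : (s ∪ t).card = 2 := by
          have := htm.2
          simp only [WFam.dimFaces, WFam.link, Finset.mem_filter] at this
          exact this.2
        rw [X.linkw2 hσm hst2]
        field_simp
        ring
      rw [Finset.mul_sum, Finset.sum_congr rfl hval, Finset.sum_filter]
      have hcong : ∀ t ∈ (X.toWFam.link σ).dimFaces 1,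
          (if s ∪ t ∈ (X.toWFam.link σ).dimFaces 2
            then X.w (s ∪ t ∪ σ) / 6 * (f t * f s) else 0)
          = (if s ∪ t ∪ σ ∈ X.toWFam.dimFaces 3
            then X.w (s ∪ t ∪ σ) / 6 * (f t * f s) else 0) := by
        intro t htY
        have ht1 : t.card = 1 := (WFam.mem_dimFaces'.1 (hsub htY)).2
        exact if_congr (X.linkY2_iff hσm hs1 ht1) rfl rfl
      rw [Finset.sum_congr rfl hcong]
      refine Finset.sum_subset hsub fun t htX htnY => ?_
      by_cases h3 : s ∪ t ∪ σ ∈ X.toWFam.dimFaces 3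
      · exact absurd (X.mem_linkY_right hσm hs1 htX h3) htnY
      · exact if_neg h3
    rw [Finset.sum_congr rfl inner_eq]
    refine Finset.sum_subset hsub fun s hsX hsnY => ?_
    refine Finset.sum_eq_zero fun t htX => ?_
    by_cases h3 : s ∪ t ∪ σ ∈ X.toWFam.dimFaces 3
    · exact absurd (X.mem_linkY_left hσm hsX (WFam.mem_dimFaces'.1 htX).2 h3) hsnY
    · exact if_neg h3
  rw [Finset.sum_congr rfl step1, Finset.sum_comm,
    Finset.sum_congr rfl (fun s (_ : s ∈ X.toWFam.dimFaces 1) => Finset.sum_comm ..),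
    X.toWFam.gen0 X.hposX f f]
  refine Finset.sum_congr rfl fun s hs => ?_
  rw [Finset.sum_filter]
  refine Finset.sum_congr rfl fun t ht => ?_
  by_cases he : s ∪ t ∈ X.toWFam.dimFaces 2
  · rw [if_pos he]
    have hsplit : ∀ σ ∈ X.toWFam.dimFaces 1,
        (if s ∪ t ∪ σ ∈ X.toWFam.dimFaces 3 then X.w (s ∪ t ∪ σ) / 6 * (f t * f s) else 0)
        = (if (s ∪ t) ∪ σ ∈ X.toWFam.dimFaces 3 then X.toWFam.w ((s ∪ t) ∪ σ) else 0)
            * (f t * f s / 6) := by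
      intro σ _
      by_cases h : s ∪ t ∪ σ ∈ X.toWFam.dimFaces 3
      · rw [if_pos h, if_pos h]; ring
      · rw [if_neg h, if_neg h, zero_mul]
    rw [Finset.sum_congr rfl hsplit, ← Finset.sum_mul, ← Finset.sum_filter, X.pwX hd he]
    ring
  · rw [if_neg he]
    refine Finset.sum_eq_zero fun σ hσm => ?_
    by_cases h3 : s ∪ t ∪ σ ∈ X.toWFam.dimFaces 3
    · exact absurd (X.edge_of_triple (WFam.mem_dimFaces'.1 hs).2
        (WFam.mem_dimFaces'.1 ht).2 (WFam.mem_dimFaces'.1 hσm).2 h3) he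
    · exact if_neg h3

end MainIdentities

section PerVertex

lemma linkLA {σ : Finset V} (hσ : σ ∈ X.toWFam.dimFaces 1) (f : Finset V → ℝ) :
    (X.toWFam.link σ).inner 1 f (fun _ => (1:ℝ)) = X.toWFam.nonLazy 1 f σ := by
  rw [WFam.inner, X.linkSE hσ,
    X.toWFam.nonLazy_one_apply f (WFam.mem_dimFaces'.1 hσ).2]
  refine Finset.sum_congr rfl fun t htm => ?_
  rw [Finset.mem_filter] at htm
  rw [X.linkw1 hσ (WFam.mem_dimFaces'.1 htm.1).2, union_comm t σ, mul_one]

lemma linkLB (hd : 2 ≤ d) {σ : Finset V} (hσ : σ ∈ X.toWFam.dimFaces 1) :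
    (X.toWFam.link σ).inner 1 (fun _ => (1:ℝ)) (fun _ => (1:ℝ)) = 1 := by
  rw [WFam.inner, X.linkSE hσ]
  have step1 : ∀ t ∈ (X.toWFam.dimFaces 1).filter
      (fun t => σ ∪ t ∈ X.toWFam.dimFaces 2),
      (X.toWFam.link σ).w t * ((1:ℝ) * 1) = X.w (t ∪ σ) / (2 * X.w σ) := by
    intro t htm
    rw [Finset.mem_filter] at htm
    rw [X.linkw1 hσ (WFam.mem_dimFaces'.1 htm.1).2, mul_one, mul_one]
  rw [Finset.sum_congr rfl step1]
  have hfc : (X.toWFam.dimFaces 1).filter (fun t => σ ∪ t ∈ X.toWFam.dimFaces 2)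
      = (X.toWFam.dimFaces 1).filter (fun t => t ∪ σ ∈ X.toWFam.dimFaces 2) :=
    Finset.filter_congr fun t _ => by rw [union_comm]
  rw [hfc, ← Finset.sum_div, X.toWFam.hb (X.h1X hd) X.hdownX hσ]
  have hwσ : X.w σ ≠ 0 := ne_of_gt (X.w_pos' hσ)
  field_simp

/-- The local inequality obtained from expansion of the link of `σ`. -/
lemma per_vertex (hd : 2 ≤ d) {lam : ℝ} {σ : Finset V} (hσ : σ ∈ X.toWFam.dimFaces 1)
    (hexp : (X.toWFam.link σ).isExpander lam) (f : Finset V → ℝ) :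
    (X.toWFam.link σ).inner 1 ((X.toWFam.link σ).nonLazy 1 f) f
      ≤ lam * (X.toWFam.link σ).inner 1 f f
        + (1 - lam) * (X.toWFam.nonLazy 1 f σ)^2 := by
  set Y := X.toWFam.link σ with hY
  set c := X.toWFam.nonLazy 1 f σ with hc
  have hLA : Y.inner 1 f (fun _ => (1:ℝ)) = c := X.linkLA hσ f
  have hLB : Y.inner 1 (fun _ => (1:ℝ)) (fun _ => (1:ℝ)) = 1 := X.linkLB hd hσ
  have hpos := X.hposY hσ
  have hGA := Y.genA hpos
  have hGB := Y.genB hpos (X.h1Y hσ hd) (X.hdownY hσ)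
  -- orthogonality of the shifted function
  have hg1 : Y.inner 1 (fun s => f s - c) (fun _ => (1:ℝ)) = 0 := by
    have expand : Y.inner 1 (fun s => f s - c) (fun _ => (1:ℝ))
        = Y.inner 1 f (fun _ => (1:ℝ))
          - c * Y.inner 1 (fun _ => (1:ℝ)) (fun _ => (1:ℝ)) := by
      simp only [WFam.inner]
      rw [Finset.mul_sum, ← Finset.sum_sub_distrib]
      exact Finset.sum_congr rfl fun s _ => by ring
    rw [expand, hLA, hLB]
    ring
  have hexp' := hexp _ hg1
  -- expansion of the shifted quadratic form
  have hMg : ∀ s, Y.nonLazy 1 (fun x => f x - c) s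
      = Y.nonLazy 1 f s - c * Y.nonLazy 1 (fun _ => (1:ℝ)) s :=
    fun s => Y.nonLazy_sub_const f c s
  have hq : Y.inner 1 (Y.nonLazy 1 (fun x => f x - c)) (fun x => f x - c)
      = Y.inner 1 (Y.nonLazy 1 f) f
        - c * Y.inner 1 (Y.nonLazy 1 f) (fun _ => (1:ℝ))
        - c * Y.inner 1 (Y.nonLazy 1 (fun _ => (1:ℝ))) f
        + c^2 * Y.inner 1 (Y.nonLazy 1 (fun _ => (1:ℝ))) (fun _ => (1:ℝ)) := by
    simp only [WFam.inner]
    rw [Finset.mul_sum, Finset.mul_sum, Finset.mul_sum, ← Finset.sum_sub_distrib,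
      ← Finset.sum_sub_distrib, ← Finset.sum_add_distrib]
    refine Finset.sum_congr rfl fun s _ => ?_
    rw [hMg s]
    ring
  have hn : Y.inner 1 (fun x => f x - c) (fun x => f x - c)
      = Y.inner 1 f f - 2 * c * Y.inner 1 f (fun _ => (1:ℝ))
        + c^2 * Y.inner 1 (fun _ => (1:ℝ)) (fun _ => (1:ℝ)) := by
    simp only [WFam.inner]
    rw [Finset.mul_sum, Finset.mul_sum, ← Finset.sum_sub_distrib, ← Finset.sum_add_distrib]
    refine Finset.sum_congr rfl fun s _ => ?_
    ring
  rw [WFam.norm2, hn, hq, hGB f, hGA (fun _ => (1:ℝ)) f, hGB (fun _ => (1:ℝ)), hLA, hLB] at hexp'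
  rw [hGB f, hLA] at hexp'
  nlinarith [hexp']

/-- The key inequality: `⟨M f, f⟩ ≤ λ‖f‖² + (1-λ)‖M f‖²`. -/
lemma key_ineq (hd : 2 ≤ d) {lam : ℝ}
    (hlink : ∀ v ∈ X.toWFam.dimFaces 1, (X.toWFam.link v).isExpander lam)
    (f : Finset V → ℝ) :
    X.toWFam.inner 1 (X.toWFam.nonLazy 1 f) f
      ≤ lam * X.toWFam.norm2 1 f + (1 - lam) * X.toWFam.norm2 1 (X.toWFam.nonLazy 1 f) := by
  have hsum : ∑ σ ∈ X.toWFam.dimFaces 1,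
      X.w σ * (X.toWFam.link σ).inner 1 ((X.toWFam.link σ).nonLazy 1 f) f
      ≤ ∑ σ ∈ X.toWFam.dimFaces 1,
        X.w σ * (lam * (X.toWFam.link σ).inner 1 f f
          + (1 - lam) * (X.toWFam.nonLazy 1 f σ)^2) := by
    refine Finset.sum_le_sum fun σ hσ => ?_
    exact mul_le_mul_of_nonneg_left (X.per_vertex hd hσ (hlink σ hσ) f)
      (le_of_lt (X.w_pos' hσ))
  rw [X.locG2 hd f] at hsum
  refine le_trans hsum (le_of_eq ?_)
  have split : ∀ σ ∈ X.toWFam.dimFaces 1,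
      X.w σ * (lam * (X.toWFam.link σ).inner 1 f f
        + (1 - lam) * (X.toWFam.nonLazy 1 f σ)^2)
      = lam * (X.w σ * (X.toWFam.link σ).inner 1 f f)
        + (1 - lam) * (X.toWFam.w σ
            * (X.toWFam.nonLazy 1 f σ * X.toWFam.nonLazy 1 f σ)) := by
    intro σ _
    ring
  rw [Finset.sum_congr rfl split, Finset.sum_add_distrib, ← Finset.mul_sum, ← Finset.mul_sum,
    X.locG1 hd f]
  rfl

end PerVertex

end WSC

open scoped RealInnerProductSpace

/-- Abstract spectral argument: a symmetric operator `T` on a finite-dimensional real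
inner product space satisfying `⟨Tx,x⟩ ≤ λ⟨x,x⟩ + (1-λ)⟨Tx,Tx⟩` and `⟨Tx,x⟩ < ⟨x,x⟩`
for `x ≠ 0` has quadratic form bounded by `λ/(1-λ)`. -/
lemma spectral_aux {E : Type*} [NormedAddCommGroup E] [InnerProductSpace ℝ E]
    [FiniteDimensional ℝ E] (T : E →ₗ[ℝ] E) (hT : T.IsSymmetric) (lam : ℝ)
    (h0 : 0 ≤ lam) (h1 : lam < 1)
    (hkey : ∀ x, ⟪T x, x⟫ ≤ lam * ⟪x, x⟫ + (1 - lam) * ⟪T x, T x⟫)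
    (hlt : ∀ x, x ≠ 0 → ⟪T x, x⟫ < ⟪x, x⟫) :
    ∀ x, ⟪T x, x⟫ ≤ lam / (1 - lam) * ⟪x, x⟫ := by
  intro x
  rcases eq_or_ne x 0 with rfl | hx
  · simp
  haveI : Nontrivial E := nontrivial_of_ne x 0 hx
  set μ : ℝ := ⨆ y : { y : E // y ≠ 0 }, RCLike.re ⟪T y, (y : E)⟫ / ‖(y : E)‖ ^ 2 with hμdef
  have hbdd : BddAbove (Set.range fun y : { y : E // y ≠ 0 } =>
      RCLike.re ⟪T y, (y : E)⟫ / ‖(y : E)‖ ^ 2) := by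
    refine ⟨‖LinearMap.toContinuousLinearMap T‖, ?_⟩
    rintro r ⟨y, rfl⟩
    have hy : (0:ℝ) < ‖(y : E)‖ := norm_pos_iff.2 y.2
    have h2 : ⟪T y, (y : E)⟫ ≤ ‖T (y : E)‖ * ‖(y : E)‖ := real_inner_le_norm _ _
    have h3 : ‖T (y : E)‖ ≤ ‖LinearMap.toContinuousLinearMap T‖ * ‖(y : E)‖ :=
      (LinearMap.toContinuousLinearMap T).le_opNorm _
    simp only [RCLike.re_to_real]
    rw [div_le_iff₀ (by positivity)]
    nlinarith
  have hray : ∀ y : E, y ≠ 0 → ⟪T y, y⟫ ≤ μ * ⟪y, y⟫ := by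
    intro y hy
    have hle : RCLike.re ⟪T y, y⟫ / ‖y‖ ^ 2 ≤ μ := le_ciSup hbdd ⟨y, hy⟩
    have hn : (0:ℝ) < ‖y‖ ^ 2 := pow_pos (norm_pos_iff.2 hy) 2
    rw [real_inner_self_eq_norm_sq]
    simp only [RCLike.re_to_real] at hle
    calc ⟪T y, y⟫ = ⟪T y, y⟫ / ‖y‖ ^ 2 * ‖y‖ ^ 2 := by field_simp
    _ ≤ μ * ‖y‖ ^ 2 := by nlinarith
  have hev : Module.End.HasEigenvalue T μ := hT.hasEigenvalue_iSup_of_finiteDimensional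
  obtain ⟨v, hv⟩ := hev.exists_hasEigenvector
  have hv0 : v ≠ 0 := hv.2
  have hTv : T v = μ • v := hv.apply_eq_smul
  have hq : (0:ℝ) < ⟪v, v⟫ := by
    rw [real_inner_self_eq_norm_sq]; exact pow_pos (norm_pos_iff.2 hv0) 2
  have hμ1 : μ < 1 := by
    have := hlt v hv0
    rw [hTv, real_inner_smul_left] at this
    nlinarith
  have hμquad : μ ≤ lam + (1 - lam) * μ ^ 2 := by
    have := hkey v
    rw [hTv, real_inner_smul_left, real_inner_smul_left, real_inner_smul_right] at this
    nlinarith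
  have hμle : μ ≤ lam / (1 - lam) := by
    rw [le_div_iff₀ (by linarith)]
    nlinarith
  have := hray x hx
  have hxx : (0:ℝ) ≤ ⟪x, x⟫ := real_inner_self_nonneg
  nlinarith

variable {d : ℕ}

/-- Transfer of a cochain to the weighted Euclidean space on the vertices. -/
def Phi (X : WSC V d) (f : Finset V → ℝ) :
    EuclideanSpace ℝ {σ : Finset V // σ ∈ X.toWFam.dimFaces 1} :=
  WithLp.toLp 2 (fun σ : {σ : Finset V // σ ∈ X.toWFam.dimFaces 1} => Real.sqrt (X.w σ.1) * f σ.1)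

/-- Transfer from the weighted Euclidean space on the vertices to cochains. -/
def Psi (X : WSC V d)
    (g : EuclideanSpace ℝ {σ : Finset V // σ ∈ X.toWFam.dimFaces 1}) : Finset V → ℝ :=
  fun τ => if h : τ ∈ X.toWFam.dimFaces 1 then g ⟨τ, h⟩ / Real.sqrt (X.w τ) else 0

lemma sqrt_w_pos (X : WSC V d) {σ : Finset V} (h : σ ∈ X.toWFam.dimFaces 1) :
    0 < Real.sqrt (X.w σ) := Real.sqrt_pos.2 (X.w_pos' h)

lemma inner_Phi (X : WSC V d) (f g : Finset V → ℝ) :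
    X.toWFam.inner 1 f g = ⟪Phi X f, Phi X g⟫ := by
  rw [WFam.inner, PiLp.inner_apply]
  simp only [RCLike.inner_apply, conj_trivial]
  rw [Finset.univ_eq_attach]
  rw [show (X.toWFam.dimFaces 1).attach.sum
      (fun σ => (Phi X g).ofLp σ * (Phi X f).ofLp σ)
      = ∑ σ ∈ (X.toWFam.dimFaces 1).attach,
          Real.sqrt (X.w σ.1) * g σ.1 * (Real.sqrt (X.w σ.1) * f σ.1) from rfl]
  rw [Finset.sum_attach (X.toWFam.dimFaces 1)
    (fun τ => Real.sqrt (X.w τ) * g τ * (Real.sqrt (X.w τ) * f τ))]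
  refine Finset.sum_congr rfl fun σ hσ => ?_
  have h : Real.sqrt (X.w σ) * Real.sqrt (X.w σ) = X.w σ :=
    Real.mul_self_sqrt (le_of_lt (X.w_pos' hσ))
  linear_combination (-(f σ * g σ)) * h

lemma Phi_Psi (X : WSC V d) (g : EuclideanSpace ℝ {σ : Finset V // σ ∈ X.toWFam.dimFaces 1}) :
    Phi X (Psi X g) = g := by
  ext σ
  simp only [Phi, Psi, dif_pos σ.2]
  rw [mul_comm, div_mul_cancel₀]
  exact ne_of_gt (sqrt_w_pos X σ.2)

lemma Psi_Phi (X : WSC V d) (f : Finset V → ℝ) :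
    ∀ τ ∈ X.toWFam.dimFaces 1, Psi X (Phi X f) τ = f τ := by
  intro τ h
  simp only [Phi, Psi, dif_pos h]
  rw [mul_comm, mul_div_assoc, div_self (ne_of_gt (sqrt_w_pos X h)), mul_one]

lemma Psi_one (X : WSC V d) :
    ∀ τ ∈ X.toWFam.dimFaces 1, Psi X (Phi X (fun _ => (1:ℝ))) τ = 1 :=
  Psi_Phi X (fun _ => (1:ℝ))

/-- The transferred walk operator. -/
def Lop (X : WSC V d) :
    EuclideanSpace ℝ {σ : Finset V // σ ∈ X.toWFam.dimFaces 1}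
      →ₗ[ℝ] EuclideanSpace ℝ {σ : Finset V // σ ∈ X.toWFam.dimFaces 1} where
  toFun g := Phi X (X.toWFam.nonLazy 1 (Psi X g))
  map_add' x y := by
    have hΨ : Psi X (x + y) = fun τ => Psi X x τ + Psi X y τ := by
      funext τ
      by_cases h : τ ∈ X.toWFam.dimFaces 1
      · simp only [Psi, dif_pos h]
        rw [show (x + y) ⟨τ, h⟩ = x ⟨τ, h⟩ + y ⟨τ, h⟩ from rfl, add_div]
      · simp only [Psi, dif_neg h, add_zero]
    ext σ
    show Real.sqrt (X.w σ.1) * (X.toWFam.nonLazy 1 (Psi X (x + y))) σ.1 = _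
    rw [hΨ, X.toWFam.nonLazy_add (Psi X x) (Psi X y) σ.1]
    show _ = Phi X (X.toWFam.nonLazy 1 (Psi X x)) σ + Phi X (X.toWFam.nonLazy 1 (Psi X y)) σ
    simp only [Phi]
    ring
  map_smul' c x := by
    have hΨ : Psi X (c • x) = fun τ => c * Psi X x τ := by
      funext τ
      by_cases h : τ ∈ X.toWFam.dimFaces 1
      · simp only [Psi, dif_pos h]
        rw [show (c • x) ⟨τ, h⟩ = c * x ⟨τ, h⟩ from rfl, mul_div_assoc]
      · simp only [Psi, dif_neg h, mul_zero]
    ext σ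
    show Real.sqrt (X.w σ.1) * (X.toWFam.nonLazy 1 (Psi X (c • x))) σ.1 = _
    rw [hΨ, X.toWFam.nonLazy_smul c (Psi X x) σ.1]
    show _ = c * Phi X (X.toWFam.nonLazy 1 (Psi X x)) σ
    simp only [Phi]
    ring

/-- The orthogonal projection away from the constants. -/
def Pop (X : WSC V d) :
    EuclideanSpace ℝ {σ : Finset V // σ ∈ X.toWFam.dimFaces 1}
      →ₗ[ℝ] EuclideanSpace ℝ {σ : Finset V // σ ∈ X.toWFam.dimFaces 1} where
  toFun x := x - ⟪Phi X (fun _ => (1:ℝ)), x⟫ • Phi X (fun _ => (1:ℝ))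
  map_add' x y := by
    rw [inner_add_right, add_smul]
    abel
  map_smul' c x := by
    simp only [RingHom.id_apply, inner_smul_right, smul_sub, smul_smul]

variable {d : ℕ}

/-- Trickling Down Theorem. If `(X, w)` is a weighted pure
`d`-dimensional simplicial complex with `d ≥ 2` such that the 1-skeleton of
the link of every vertex is a `λ`-spectral expander (`0 ≤ λ < 1`) and the
1-skeleton of `X` is connected, then the 1-skeleton of `X` is a
`(λ/(1-λ))`-spectral expander. -/
theorem trickling_down (X : WSC V d) (hd : 2 ≤ d) (lam : ℝ) (h0 : 0 ≤ lam)
    (h1 : lam < 1)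
    (hlink : ∀ v ∈ X.toWFam.dimFaces 1, (X.toWFam.link v).isExpander lam)
    (hconn : X.toWFam.isConnected) :
    X.toWFam.isExpander (lam / (1 - lam)) := by
  classical
  have hGA := X.toWFam.genA X.hposX
  have hGB := X.toWFam.genB X.hposX (X.h1X hd) X.hdownX
  -- the distinguished unit vector
  have hinner1 : X.toWFam.inner 1 (fun _ => (1:ℝ)) (fun _ => (1:ℝ)) = 1 := by
    rw [WFam.inner]
    rw [Finset.sum_congr rfl (fun σ (_ : σ ∈ X.toWFam.dimFaces 1) => by
      rw [mul_one, mul_one] : ∀ σ ∈ X.toWFam.dimFaces 1,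
        X.toWFam.w σ * ((1:ℝ) * 1) = X.toWFam.w σ)]
    exact X.sum_w_vertices
  have he : ⟪Phi X (fun _ => (1:ℝ)), Phi X (fun _ => (1:ℝ))⟫ = 1 := by
    rw [← inner_Phi, hinner1]
  have hPdef : ∀ x, Pop X x
      = x - ⟪Phi X (fun _ => (1:ℝ)), x⟫ • Phi X (fun _ => (1:ℝ)) := fun _ => rfl
  have hLdef : ∀ g, Lop X g = Phi X (X.toWFam.nonLazy 1 (Psi X g)) := fun _ => rfl
  have hPorth : ∀ x, ⟪Phi X (fun _ => (1:ℝ)), Pop X x⟫ = 0 := by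
    intro x
    rw [hPdef, inner_sub_right, inner_smul_right, he, mul_one, sub_self]
  have hPfix : ∀ x, ⟪Phi X (fun _ => (1:ℝ)), x⟫ = 0 → Pop X x = x := by
    intro x h
    rw [hPdef, h, zero_smul, sub_zero]
  have hPsym : ∀ x y, ⟪Pop X x, y⟫ = ⟪x, Pop X y⟫ := by
    intro x y
    simp only [hPdef, inner_sub_left, inner_sub_right, inner_smul_left, inner_smul_right,
      conj_trivial]
    rw [real_inner_comm x (Phi X (fun _ => (1:ℝ)))]
    ring
  have hPnormid : ∀ x, ⟪Pop X x, Pop X x⟫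
      = ⟪x, x⟫ - ⟪Phi X (fun _ => (1:ℝ)), x⟫ ^ 2 := by
    intro x
    simp only [hPdef, inner_sub_left, inner_sub_right, inner_smul_left, inner_smul_right,
      conj_trivial, he]
    rw [real_inner_comm x (Phi X (fun _ => (1:ℝ)))]
    ring
  have hPle : ∀ x, ⟪Pop X x, Pop X x⟫ ≤ ⟪x, x⟫ := by
    intro x
    rw [hPnormid]
    nlinarith [sq_nonneg ⟪Phi X (fun _ => (1:ℝ)), x⟫]
  have dict2 : ∀ g h, ⟪Lop X g, h⟫
      = X.toWFam.inner 1 (X.toWFam.nonLazy 1 (Psi X g)) (Psi X h) := by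
    intro g h
    conv_lhs => rw [hLdef, ← Phi_Psi X h]
    rw [← inner_Phi]
  have hLsym : ∀ g h, ⟪Lop X g, h⟫ = ⟪g, Lop X h⟫ := by
    intro g h
    rw [dict2 g h, hGA, ← dict2 h g, real_inner_comm]
  have hMorth : ∀ g, X.toWFam.inner 1 (Psi X g) (fun _ => (1:ℝ))
      = ⟪g, Phi X (fun _ => (1:ℝ))⟫ := by
    intro g
    rw [inner_Phi, Phi_Psi]
  have hLorthe : ∀ x, ⟪Phi X (fun _ => (1:ℝ)), Lop X (Pop X x)⟫ = 0 := by
    intro x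
    rw [real_inner_comm, dict2,
      X.toWFam.inner_congr (fun t _ => rfl) (Psi_one X), hGB, hMorth, real_inner_comm]
    exact hPorth x
  set T := (Pop X).comp ((Lop X).comp (Pop X)) with hTset
  have hTapply : ∀ x, T x = Lop X (Pop X x) := by
    intro x
    show Pop X (Lop X (Pop X x)) = Lop X (Pop X x)
    exact hPfix _ (hLorthe x)
  have hTsym : T.IsSymmetric := by
    intro x y
    show ⟪Pop X (Lop X (Pop X x)), y⟫ = ⟪x, Pop X (Lop X (Pop X y))⟫
    rw [hPsym, hLsym, ← hPsym]
  have hT1 : ∀ x, ⟪T x, x⟫ = X.toWFam.inner 1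
      (X.toWFam.nonLazy 1 (Psi X (Pop X x))) (Psi X (Pop X x)) := by
    intro x
    rw [hTapply x]
    have hxd : ⟪Lop X (Pop X x),
        x - ⟪Phi X (fun _ => (1:ℝ)), x⟫ • Phi X (fun _ => (1:ℝ))⟫
        = ⟪Lop X (Pop X x), x⟫ := by
      rw [inner_sub_right, inner_smul_right,
        real_inner_comm (Phi X (fun _ => (1:ℝ))) (Lop X (Pop X x)), hLorthe x, mul_zero,
        sub_zero]
    rw [← hPdef x] at hxd
    rw [← hxd, dict2]
  have hT3 : ∀ x, ⟪Pop X x, Pop X x⟫ = X.toWFam.norm2 1 (Psi X (Pop X x)) := by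
    intro x
    rw [WFam.norm2, inner_Phi, Phi_Psi]
  have hkeyT : ∀ x, ⟪T x, x⟫ ≤ lam * ⟪x, x⟫ + (1 - lam) * ⟪T x, T x⟫ := by
    intro x
    have hTT : ⟪T x, T x⟫ = X.toWFam.norm2 1
        (X.toWFam.nonLazy 1 (Psi X (Pop X x))) := by
      rw [hTapply x, hLdef, WFam.norm2, ← inner_Phi]
    have hkey := X.key_ineq hd hlink (Psi X (Pop X x))
    have hle2 : X.toWFam.norm2 1 (Psi X (Pop X x)) ≤ ⟪x, x⟫ := by
      rw [← hT3]; exact hPle x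
    have hmul := mul_le_mul_of_nonneg_left hle2 h0
    rw [hT1 x, hTT]
    linarith
  have hltT : ∀ x, x ≠ 0 → ⟪T x, x⟫ < ⟪x, x⟫ := by
    intro x hx
    have hxpos : (0:ℝ) < ⟪x, x⟫ := by
      rw [real_inner_self_eq_norm_sq]; exact pow_pos (norm_pos_iff.2 hx) 2
    by_cases hg : Pop X x = 0
    · rw [hTapply x, hg, map_zero]
      rw [inner_zero_left]
      exact hxpos
    · have hgg : (0:ℝ) < ⟪Pop X x, Pop X x⟫ := by
        rw [real_inner_self_eq_norm_sq]; exact pow_pos (norm_pos_iff.2 hg) 2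
      have horth : X.toWFam.inner 1 (Psi X (Pop X x)) (fun _ => (1:ℝ)) = 0 := by
        rw [hMorth, real_inner_comm]
        exact hPorth x
      have hne : X.toWFam.norm2 1 (Psi X (Pop X x)) ≠ 0 := by
        rw [← hT3]; exact ne_of_gt hgg
      have hcon := hconn (Psi X (Pop X x)) horth hne
      rw [hT1 x]
      calc X.toWFam.inner 1 (X.toWFam.nonLazy 1 (Psi X (Pop X x))) (Psi X (Pop X x))
          < X.toWFam.norm2 1 (Psi X (Pop X x)) := hcon
        _ = ⟪Pop X x, Pop X x⟫ := (hT3 x).symm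
        _ ≤ ⟪x, x⟫ := hPle x
  have main := spectral_aux T hTsym lam h0 h1 hkeyT hltT
  intro f hf
  have hsymm1 : X.toWFam.inner 1 (fun _ => (1:ℝ)) f = 0 := by
    rw [← hf, WFam.inner, WFam.inner]
    exact Finset.sum_congr rfl fun σ _ => by ring
  have hxe : ⟪Phi X (fun _ => (1:ℝ)), Phi X f⟫ = 0 := by
    rw [← inner_Phi]
    exact hsymm1
  have hPx : Pop X (Phi X f) = Phi X f := hPfix _ hxe
  have hTx2 : ⟪T (Phi X f), Phi X f⟫
      = X.toWFam.inner 1 (X.toWFam.nonLazy 1 f) f := by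
    rw [hT1 (Phi X f), hPx]
    exact X.toWFam.inner_congr
      (fun t _ => X.toWFam.nonLazy_congr (Psi_Phi X f) t) (Psi_Phi X f)
  have hxx : ⟪Phi X f, Phi X f⟫ = X.toWFam.norm2 1 f := by
    rw [WFam.norm2, inner_Phi]
  have hres := main (Phi X f)
  rw [hTx2, hxx] at hres
  exact hres

end

end HDRW
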